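/- arXiv:math/0008020 — 2 statements merged into one kernel-verified Lean document; each statement's English description precedes it below -/
import Mathlib

section
/- Define a one-step relation ⇒ on P by: s ⇒ t iff t = s^{↓1} (one grain is added on the first column), or s →_i t for some i ≥ 1 (a fall or a slip, which preserves the total sum). Then for all s, t ∈ P, t is reachable from s by a finite sequence of ⇒-steps if and only if s ≥_∞ t, i.e., Σ_j(s) ≤ Σ_j(t) for every j ≥ 1. -/
/-!
Partitions are modelled as functions `s : ℕ → ℕ` (0-based: `s 0` is the first
part `s_1`), nonincreasing and eventually zero.  A paper index `i ≥ 1`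
(columns, transitions `→_i`, increments `s^{↓i}`) corresponds to the Lean
index `i - 1`.
-/

/-- `s` is a partition: nonincreasing and eventually zero. -/
def IsPartition (s : ℕ → ℕ) : Prop :=
  (∀ i, s (i + 1) ≤ s i) ∧ ∃ N, ∀ i, N ≤ i → s i = 0

/-- `j`-th suffix sum (0-based: `suff s 0` is the total sum `|s|`,
`suff s (j-1)` is the paper's `Σ_j`). -/
noncomputable def suff (s : ℕ → ℕ) (j : ℕ) : ℕ := ∑' i, s (j + i)

/-- `s` is a partition of `n`. -/
noncomputable def IsPartOf (n : ℕ) (s : ℕ → ℕ) : Prop := IsPartition s ∧ suff s 0 = n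

/-- Prefix sum of the first `j` parts. -/
def psum (s : ℕ → ℕ) (j : ℕ) : ℕ := ∑ i ∈ Finset.range j, s i

/-- Dominance ordering: `Dom s t` means `s ≥ t`, i.e. every prefix sum of `s`
is at least the corresponding prefix sum of `t`. -/
def Dom (s t : ℕ → ℕ) : Prop := ∀ j, psum t j ≤ psum s j

/-- `s^{↓(i+1)}`: add one grain on the (0-based) `i`-th column. -/
def incr (s : ℕ → ℕ) (i : ℕ) : ℕ → ℕ := Function.update s i (s i + 1)

/-- Move one grain from column `a` to column `b` (0-based). -/
def moveGrain (s : ℕ → ℕ) (a b : ℕ) : ℕ → ℕ :=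
  fun j => if j = a then s a - 1 else if j = b then s b + 1 else s j

/-- `s` has a cliff at (0-based) column `i`: `s_i ≥ s_{i+1} + 2`. -/
def Cliff (s : ℕ → ℕ) (i : ℕ) : Prop := s (i + 1) + 2 ≤ s i

/-- `s` has a slippery step at (0-based) column `i`, the plateau ending at
(0-based) column `m`:  `s_i - 1 = s_{i+1} = ⋯ = s_m = s_{m+1} + 1` (in 0-based
indices), with `m ≥ i + 1`. -/
def SlipAt (s : ℕ → ℕ) (i m : ℕ) : Prop :=
  i + 1 ≤ m ∧ (∀ j, i + 1 ≤ j → j ≤ m → s j + 1 = s i) ∧ s (m + 1) + 2 = s i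

/-- The transition `s →_{i+1} t` of the paper (0-based `i`): a fall from a
cliff at `i`, or a slip from a slippery step at `i` (the grain landing just
after the plateau). -/
def Step (s : ℕ → ℕ) (i : ℕ) (t : ℕ → ℕ) : Prop :=
  (Cliff s i ∧ t = moveGrain s i (i + 1)) ∨
  (∃ m, SlipAt s i m ∧ t = moveGrain s i (m + 1))

/-- The set of configurations directly reachable from `s`. -/
def dirreach (s : ℕ → ℕ) : Set (ℕ → ℕ) := {t | ∃ i, Step s i t}

/-- `s` has a (slippery, if `l ≥ 2`) plateau of length `l` at `1`:
`s_1 = s_2 = ⋯ = s_l = s_{l+1} + 1`. -/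
def SlipperyPlateau1 (s : ℕ → ℕ) (l : ℕ) : Prop :=
  (∀ j, j < l → s j = s 0) ∧ s l + 1 = s 0

/-- `s` has a non-slippery plateau at `1`:
`s_1 = ⋯ = s_l ≥ s_{l+1} + 2` for some `l ≥ 2`. -/
def NonSlipperyPlateau1 (s : ℕ → ℕ) : Prop :=
  ∃ l, 2 ≤ l ∧ (∀ j, j < l → s j = s 0) ∧ s l + 2 ≤ s 0

/-- `s` has a slippery step at `1`. -/
def SlipperyStep1 (s : ℕ → ℕ) : Prop := ∃ m, SlipAt s 0 m

/-- `s` has a non-slippery step at `1`: `s_1 = s_2 + 1` and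
`s_2 = ⋯ = s_m ≥ s_{m+1} + 2` for some `m ≥ 2` (here `m` is 0-based, `≥ 1`). -/
def NonSlipperyStep1 (s : ℕ → ℕ) : Prop :=
  s 0 = s 1 + 1 ∧ ∃ m, 1 ≤ m ∧ (∀ j, 1 ≤ j → j ≤ m → s j = s 1) ∧ s (m + 1) + 2 ≤ s 1

/-- `c` is the infimum of `a` and `b` in the dominance lattice `L_B(n)`. -/
noncomputable def IsInfOn (n : ℕ) (a b c : ℕ → ℕ) : Prop :=
  IsPartOf n c ∧ Dom a c ∧ Dom b c ∧ ∀ d, IsPartOf n d → Dom a d → Dom b d → Dom c d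

/-- `c` is the supremum of `a` and `b` in the dominance lattice `L_B(n)`. -/
noncomputable def IsSupOn (n : ℕ) (a b c : ℕ → ℕ) : Prop :=
  IsPartOf n c ∧ Dom c a ∧ Dom c b ∧ ∀ d, IsPartOf n d → Dom d a → Dom d b → Dom d c

/-- The order `≥_∞` on the set `P` of all partitions: `GeInf s t` means
`s ≥_∞ t`, i.e. every suffix sum of `s` is at most that of `t`. -/
noncomputable def GeInf (s t : ℕ → ℕ) : Prop := ∀ j, suff s j ≤ suff t j

/-- `c` is the infimum of `a` and `b` in `(P, ≥_∞)`. -/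
noncomputable def IsInfP (a b c : ℕ → ℕ) : Prop :=
  IsPartition c ∧ GeInf a c ∧ GeInf b c ∧
    ∀ d, IsPartition d → GeInf a d → GeInf b d → GeInf c d

/-- `c` is the supremum of `a` and `b` in `(P, ≥_∞)`. -/
noncomputable def IsSupP (a b c : ℕ → ℕ) : Prop :=
  IsPartition c ∧ GeInf c a ∧ GeInf c b ∧
    ∀ d, IsPartition d → GeInf d a → GeInf d b → GeInf d c

/-- The map `π`: delete the first part, `(s_1, s_2, …) ↦ (s_2, …)`. -/
def shift (s : ℕ → ℕ) : ℕ → ℕ := fun i => s (i + 1)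

/-- The one-step relation `s ⇒ t`: add one grain on the first column, or
perform a fall or a slip. -/
def StepRel (s t : ℕ → ℕ) : Prop := t = incr s 0 ∨ ∃ i, Step s i t

section Aux

lemma psum_succ (x : ℕ → ℕ) (j : ℕ) : psum x (j+1) = psum x j + x j :=
  Finset.sum_range_succ x j

lemma psum_zero (x : ℕ → ℕ) : psum x 0 = 0 := rfl

lemma psum_split (x : ℕ → ℕ) {a j : ℕ} (h : a ≤ j) :
    psum x j = psum x a + ∑ i ∈ Finset.Ico a j, x i := by
  unfold psum
  simp only [Finset.range_eq_Ico]
  exact (Finset.sum_Ico_consecutive x (Nat.zero_le a) h).symm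

lemma psum_mono (x : ℕ → ℕ) {i j : ℕ} (h : i ≤ j) : psum x i ≤ psum x j := by
  rw [psum_split x h]; omega

lemma psum_stable (x : ℕ → ℕ) {c j : ℕ} (h : ∀ i, c ≤ i → x i = 0) (hcj : c ≤ j) :
    psum x j = psum x c := by
  rw [psum_split x hcj, Finset.sum_eq_zero (fun i hi => h i (Finset.mem_Ico.mp hi).1)]
  omega

lemma anti {s : ℕ → ℕ} (hs : ∀ i, s (i+1) ≤ s i) : ∀ {i j : ℕ}, i ≤ j → s j ≤ s i := by
  intro i j h
  induction j, h using Nat.le_induction with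
  | base => exact le_rfl
  | succ n hn ih => exact le_trans (hs n) ih

lemma moveGrain_apply (s : ℕ → ℕ) (a b j : ℕ) :
    moveGrain s a b j = if j = a then s a - 1 else if j = b then s b + 1 else s j := rfl

lemma psum_moveGrain (s : ℕ → ℕ) {a b : ℕ} (hab : a < b) (ha : 1 ≤ s a) (j : ℕ) :
    psum (moveGrain s a b) j + (if a < j then 1 else 0)
      = psum s j + (if b < j then 1 else 0) := by
  induction j with
  | zero => simp [psum_zero]
  | succ j ih =>
    rw [psum_succ, psum_succ, moveGrain_apply]
    by_cases h1 : j = a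
    · subst h1
      rw [if_pos rfl]
      split_ifs at ih ⊢ <;> omega
    · rw [if_neg h1]
      by_cases h2 : j = b
      · subst h2
        rw [if_pos rfl]
        split_ifs at ih ⊢ <;> omega
      · rw [if_neg h2]
        split_ifs at ih ⊢ <;> omega

lemma psum_incrn (s : ℕ → ℕ) (n : ℕ) (j : ℕ) :
    psum (fun i => if i = 0 then s 0 + n else s i) j
      = psum s j + (if 0 < j then n else 0) := by
  induction j with
  | zero => simp [psum_zero]
  | succ j ih =>
    rw [psum_succ, psum_succ]
    by_cases h1 : j = 0
    · subst h1
      rw [if_pos rfl]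
      split_ifs at ih ⊢ <;> omega
    · rw [if_neg h1]
      split_ifs at ih ⊢ <;> omega

lemma suff_psum {x : ℕ → ℕ} {N : ℕ} (h : ∀ i, N ≤ i → x i = 0) {j : ℕ} (hj : j ≤ N) :
    suff x j + psum x j = psum x N := by
  have h1 : suff x j = ∑ i ∈ Finset.Ico j N, x i := by
    rw [suff, tsum_eq_sum (s := Finset.range (N - j))
      (fun i hi => h (j + i) (by simp [Finset.mem_range] at hi; omega))]
    exact (Finset.sum_Ico_eq_sum_range x j N).symm
  rw [h1, psum_split x hj]
  omega

lemma suff_zero {x : ℕ → ℕ} {N : ℕ} (h : ∀ i, N ≤ i → x i = 0) {j : ℕ} (hj : N ≤ j) :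
    suff x j = 0 := by
  have h1 : (fun i => x (j + i)) = fun _ => 0 := funext fun i => h _ (by omega)
  rw [suff, h1, tsum_zero]

lemma step_move {s t : ℕ → ℕ} {i : ℕ} (h : Step s i t) :
    ∃ b, i < b ∧ 1 ≤ s i ∧ t = moveGrain s i b := by
  rcases h with ⟨hc, ht⟩ | ⟨m, hm, ht⟩
  · exact ⟨i+1, by omega, by unfold Cliff at hc; omega, ht⟩
  · exact ⟨m+1, by have := hm.1; omega, by have := hm.2.2; omega, ht⟩

end Aux

lemma part_fall {s : ℕ → ℕ} {a : ℕ} (hs : IsPartition s) (h : Cliff s a) :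
    IsPartition (moveGrain s a (a+1)) := by
  obtain ⟨hmono, N, hN⟩ := hs
  unfold Cliff at h
  constructor
  · intro i
    rw [moveGrain_apply, moveGrain_apply]
    have h1 := hmono i
    by_cases e1 : i + 1 = a
    · have e1' : s (i+1) = s a := by rw [e1]
      rw [if_pos e1, if_neg (by omega), if_neg (by omega)]
      omega
    · by_cases e2 : i = a
      · have e2' : s i = s a := by rw [e2]
        rw [if_neg e1, if_pos (by omega), if_pos e2]
        omega
      · by_cases e3 : i = a + 1
        · have e3' : s i = s (a+1) := by rw [e3]
          rw [if_neg e1, if_neg (by omega), if_neg e2, if_pos e3]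
          omega
        · rw [if_neg e1, if_neg (by omega), if_neg e2, if_neg e3]
          exact h1
  · exact ⟨N + a + 2, fun i hi => by
      rw [moveGrain_apply, if_neg (by omega), if_neg (by omega)]
      exact hN i (by omega)⟩

lemma part_slip {s : ℕ → ℕ} {a m : ℕ} (hs : IsPartition s) (h : SlipAt s a m) :
    IsPartition (moveGrain s a (m+1)) := by
  obtain ⟨hmono, N, hN⟩ := hs
  obtain ⟨ham, hplat, hm⟩ := h
  constructor
  · intro i
    rw [moveGrain_apply, moveGrain_apply]
    have h1 := hmono i
    by_cases e1 : i + 1 = a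
    · have e1' : s (i+1) = s a := by rw [e1]
      rw [if_pos e1, if_neg (by omega), if_neg (by omega)]
      omega
    · by_cases e2 : i = a
      · have e3 : s (a+1) + 1 = s a := hplat (a+1) le_rfl ham
        have e4 : s (i+1) = s (a+1) := by rw [e2]
        rw [if_neg e1, if_neg (by omega), if_pos e2]
        omega
      · by_cases e5 : i = m
        · have e6 : s m + 1 = s a := hplat m (by omega) le_rfl
          have e7 : s i = s m := by rw [e5]
          rw [if_neg e1, if_pos (by omega), if_neg e2, if_neg (by omega)]
          omega
        · by_cases e8 : i = m + 1
          · have e10 : s i = s (m+1) := by rw [e8]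
            rw [if_neg e1, if_neg (by omega), if_neg e2, if_pos e8]
            omega
          · rw [if_neg e1, if_neg (by omega), if_neg e2, if_neg e8]
            exact h1
  · exact ⟨N + m + 2, fun i hi => by
      rw [moveGrain_apply, if_neg (by omega), if_neg (by omega)]
      exact hN i (by omega)⟩

lemma psum_strict {s t : ℕ → ℕ} {a j : ℕ} (haj : a < j)
    (hpre : psum s a = psum t a) (hta : t a < s a)
    (hterm : ∀ i, a < i → i < j → t i ≤ s i) :
    psum t j < psum s j := by
  rw [psum_split s (le_of_lt haj), psum_split t (le_of_lt haj), hpre]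
  have h1 : ∑ i ∈ Finset.Ico a j, t i < ∑ i ∈ Finset.Ico a j, s i := by
    apply Finset.sum_lt_sum
    · intro i hi
      rcases Finset.mem_Ico.mp hi with ⟨h2, h3⟩
      rcases Nat.eq_or_lt_of_le h2 with h4 | h4
      · rw [← h4]; exact le_of_lt hta
      · exact hterm i h4 h3
    · exact ⟨a, Finset.mem_Ico.mpr ⟨le_rfl, haj⟩, hta⟩
  omega

lemma plateau {s : ℕ → ℕ} (hmono : ∀ i, s (i+1) ≤ s i) {a v : ℕ} (hv : s a = v)
    (hex : ∃ i, a ≤ i ∧ s (i+1) < v) :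
    ∃ b, a ≤ b ∧ (∀ j, a ≤ j → j ≤ b → s j = v) ∧ s (b+1) < v := by
  classical
  refine ⟨Nat.find hex, (Nat.find_spec hex).1, ?_, (Nat.find_spec hex).2⟩
  have key : ∀ k, a + k ≤ Nat.find hex → s (a + k) = v := by
    intro k
    induction k with
    | zero => intro _; exact hv
    | succ k ih =>
      intro hk
      have h1 := ih (by omega)
      have h2 := Nat.find_min hex (m := a + k) (by omega)
      push_neg at h2
      have h3 := h2 (by omega)
      have h4 := hmono (a + k)
      have h5 : s (a + (k + 1)) = s (a + k + 1) := rfl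
      omega
  intro j hj1 hj2
  have := key (j - a) (by omega)
  rwa [Nat.add_sub_cancel' hj1] at this

lemma exists_move {N : ℕ} {s t : ℕ → ℕ} (hs : IsPartition s) (ht : IsPartition t)
    (hsN : ∀ i, N ≤ i → s i = 0) (htN : ∀ i, N ≤ i → t i = 0)
    (hdom : ∀ j, psum t j ≤ psum s j) (heq : psum s N = psum t N) (hne : s ≠ t) :
    ∃ a b, a < b ∧ 1 ≤ s a ∧ Step s a (moveGrain s a b) ∧
      IsPartition (moveGrain s a b) ∧ ∀ j, a < j → j ≤ b → psum t j < psum s j := by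
  classical
  have hex0 : ∃ i, s i ≠ t i := by
    by_contra h
    push_neg at h
    exact hne (funext h)
  obtain ⟨a, hane, hea⟩ : ∃ a, s a ≠ t a ∧ ∀ i, i < a → s i = t i :=
    ⟨Nat.find hex0, Nat.find_spec hex0, fun i hi => not_not.mp (Nat.find_min hex0 hi)⟩
  have hpre : psum s a = psum t a :=
    Finset.sum_congr rfl (fun i hi => hea i (Finset.mem_range.mp hi))
  have hta : t a < s a := by
    have h1 := hdom (a+1)
    rw [psum_succ, psum_succ] at h1
    omega
  have hsa1 : 1 ≤ s a := by omega
  have haN : a < N := by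
    by_contra h
    push_neg at h
    have := hsN a h
    omega
  have hex1 : ∃ i, a ≤ i ∧ s (i+1) < s a := by
    refine ⟨N, le_of_lt haN, ?_⟩
    rw [hsN (N+1) (by omega)]
    omega
  obtain ⟨a', haa', hplat1, ha'lt⟩ := plateau hs.1 rfl hex1
  have hsaa' : s a' = s a := hplat1 a' haa' le_rfl
  have htle : ∀ i, a ≤ i → t i ≤ t a := fun i hi => anti ht.1 hi
  by_cases hc : s (a'+1) + 2 ≤ s a
  · -- fall at a'
    have hcliff : Cliff s a' := by unfold Cliff; omega
    refine ⟨a', a'+1, by omega, by omega, Or.inl ⟨hcliff, rfl⟩, part_fall hs hcliff, ?_⟩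
    intro j hj1 hj2
    have hj : j = a' + 1 := by omega
    subst hj
    apply psum_strict (by omega) hpre hta
    intro i h1 h2
    have h3 : s i = s a := hplat1 i (by omega) (by omega)
    have h4 := htle i (by omega)
    omega
  · push_neg at hc
    have hv : s (a'+1) + 1 = s a := by omega
    have hstrict1 : ∀ j, a < j → j ≤ a' + 1 → psum t j < psum s j := by
      intro j h1 h2
      apply psum_strict h1 hpre hta
      intro i h3 h4
      have := hplat1 i (by omega) (by omega)
      have := htle i (by omega)
      omega
    have hsa2 : 2 ≤ s a := by
      by_contra h2
      push_neg at h2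
      have h3 : s a = 1 := by omega
      have h4 : t a = 0 := by omega
      have hszero : ∀ i, a' + 1 ≤ i → s i = 0 := by
        intro i hi
        have := anti hs.1 hi
        omega
      have htzero : ∀ i, a ≤ i → t i = 0 := by
        intro i hi
        have := htle i hi
        omega
      have ha'N : a' < N := by
        by_contra h5
        push_neg at h5
        have := hsN a' h5
        omega
      have h6 : psum s N = psum s (a'+1) := psum_stable s hszero (by omega)
      have h7 : psum t N = psum t a := psum_stable t htzero (le_of_lt haN)
      have h8 := hstrict1 (a'+1) (by omega) le_rfl
      have h9 := psum_mono t (show a ≤ a' + 1 by omega)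
      omega
    have ha'N : a' < N := by
      by_contra h5
      push_neg at h5
      have := hsN a' h5
      omega
    have hex2 : ∃ i, a' + 1 ≤ i ∧ s (i+1) < s (a'+1) := by
      refine ⟨N, by omega, ?_⟩
      rw [hsN (N+1) (by omega)]
      omega
    obtain ⟨m, ham, hplat2, hmlt⟩ := plateau hs.1 rfl hex2
    have hsm : s m = s (a'+1) := hplat2 m ham le_rfl
    have hterm : ∀ i, a < i → i ≤ m → t i ≤ s i := by
      intro i h1 h2
      have h3 := htle i (by omega)
      by_cases h4 : i ≤ a'
      · have := hplat1 i (by omega) h4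
        omega
      · have := hplat2 i (by omega) h2
        omega
    have hstrict : ∀ j, a < j → j ≤ m + 1 → psum t j < psum s j := by
      intro j h1 h2
      apply psum_strict h1 hpre hta
      intro i h3 h4
      exact hterm i h3 (by omega)
    by_cases h2a : s (m+1) + 2 = s a
    · -- slip at a'
      have hslip : SlipAt s a' m := by
        refine ⟨by omega, ?_, by omega⟩
        intro j hj1 hj2
        have := hplat2 j hj1 hj2
        omega
      refine ⟨a', m+1, by omega, by omega, Or.inr ⟨m, hslip, rfl⟩, part_slip hs hslip, ?_⟩
      intro j hj1 hj2
      exact hstrict j (by omega) hj2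
    · -- cliff at m
      have hcliff : Cliff s m := by unfold Cliff; omega
      refine ⟨m, m+1, by omega, by omega, Or.inl ⟨hcliff, rfl⟩, part_fall hs hcliff, ?_⟩
      intro j hj1 hj2
      have hj : j = m + 1 := by omega
      subst hj
      exact hstrict (m+1) (by omega) le_rfl

lemma reach_of_dom (N : ℕ) : ∀ d s t, IsPartition s → IsPartition t →
    (∀ i, N ≤ i → s i = 0) → (∀ i, N ≤ i → t i = 0) →
    (∀ j, psum t j ≤ psum s j) → psum s N = psum t N →
    (∑ j ∈ Finset.range N, (psum s j - psum t j)) = d →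
    Relation.ReflTransGen StepRel s t := by
  intro d
  induction d using Nat.strong_induction_on with
  | _ d ih =>
  intro s t hs ht hsN htN hdom heq hd
  by_cases hne : s = t
  · subst hne; exact .refl
  obtain ⟨a, b, hab, ha1, hstep, hpart, hstrict⟩ := exists_move hs ht hsN htN hdom heq hne
  have hbN : b < N := by
    by_contra hb
    push_neg at hb
    have h1 := hstrict b hab le_rfl
    have h2 : psum s b = psum s N := psum_stable s hsN hb
    have h3 : psum t b = psum t N := psum_stable t htN hb
    omega
  have hP := psum_moveGrain s hab ha1
  have hvN : ∀ i, N ≤ i → moveGrain s a b i = 0 := by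
    intro i hi
    rw [moveGrain_apply, if_neg (by omega), if_neg (by omega)]
    exact hsN i hi
  have hdom' : ∀ j, psum t j ≤ psum (moveGrain s a b) j := by
    intro j
    have h1 := hP j
    have h2 := hdom j
    by_cases h3 : a < j
    · by_cases h4 : j ≤ b
      · have h5 := hstrict j h3 h4
        rw [if_pos h3, if_neg (by omega)] at h1
        omega
      · rw [if_pos h3, if_pos (by omega)] at h1
        omega
    · rw [if_neg h3, if_neg (by omega)] at h1
      omega
  have heq' : psum (moveGrain s a b) N = psum t N := by
    have h1 := hP N
    rw [if_pos (by omega), if_pos hbN] at h1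
    omega
  have hlt : (∑ j ∈ Finset.range N, (psum (moveGrain s a b) j - psum t j)) < d := by
    rw [← hd]
    apply Finset.sum_lt_sum
    · intro j _
      have h1 := hP j
      have h2 := hdom j
      split_ifs at h1 <;> omega
    · refine ⟨a + 1, Finset.mem_range.mpr (by omega), ?_⟩
      have h1 := hP (a+1)
      rw [if_pos (by omega), if_neg (by omega)] at h1
      have h2 := hstrict (a+1) (by omega) (by omega)
      omega
  exact Relation.ReflTransGen.head (Or.inr ⟨a, hstep⟩)
    (ih _ hlt (moveGrain s a b) t hpart ht hvN htN hdom' heq' rfl)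

lemma step_forward {u v : ℕ → ℕ} {N : ℕ} (hN : ∀ i, N ≤ i → u i = 0) (h : StepRel u v) :
    ∃ M, N ≤ M ∧ (∀ i, M ≤ i → v i = 0) ∧ ∀ j, suff u j ≤ suff v j := by
  rcases h with h | ⟨a, h⟩
  · -- incr
    have hval : ∀ j, v j = if j = 0 then u 0 + 1 else u j := by
      intro j
      rw [h]
      simp [incr, Function.update_apply]
    have hps : ∀ j, psum v j = psum u j + (if 0 < j then 1 else 0) := by
      have h1 : v = fun i => if i = 0 then u 0 + 1 else u i := funext hval
      rw [h1]
      exact psum_incrn u 1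
    have hvN : ∀ i, N + 1 ≤ i → v i = 0 := by
      intro i hi
      rw [hval, if_neg (by omega)]
      exact hN i (by omega)
    refine ⟨N + 1, by omega, hvN, ?_⟩
    intro j
    by_cases hj : j ≤ N + 1
    · have e1 := suff_psum (fun i hi => hN i (by omega : N ≤ i)) hj
      have e2 := suff_psum hvN hj
      have e3 := hps j
      have e4 := hps (N+1)
      split_ifs at e3 e4 <;> omega
    · rw [suff_zero hvN (by omega), suff_zero hN (by omega)]
  · -- move
    obtain ⟨b, hab, ha1, rfl⟩ := step_move h
    refine ⟨N + b + 1, by omega, ?_, ?_⟩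
    · intro i hi
      rw [moveGrain_apply, if_neg (by omega), if_neg (by omega)]
      exact hN i (by omega)
    · intro j
      have hvN : ∀ i, N + b + 1 ≤ i → moveGrain u a b i = 0 := by
        intro i hi
        rw [moveGrain_apply, if_neg (by omega), if_neg (by omega)]
        exact hN i (by omega)
      have huN : ∀ i, N + b + 1 ≤ i → u i = 0 := fun i hi => hN i (by omega)
      by_cases hj : j ≤ N + b + 1
      · have e1 := suff_psum huN hj
        have e2 := suff_psum hvN hj
        have e3 := psum_moveGrain u hab ha1 j
        have e4 := psum_moveGrain u hab ha1 (N + b + 1)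
        rw [if_pos (by omega), if_pos (by omega)] at e4
        split_ifs at e3 <;> omega
      · rw [suff_zero hvN (by omega), suff_zero huN (by omega)]

lemma forward {s t : ℕ → ℕ} (hs : ∃ N, ∀ i, N ≤ i → s i = 0)
    (h : Relation.ReflTransGen StepRel s t) :
    (∃ N, ∀ i, N ≤ i → t i = 0) ∧ ∀ j, suff s j ≤ suff t j := by
  induction h with
  | refl => exact ⟨hs, fun _ => le_rfl⟩
  | tail _ hbc ih =>
    obtain ⟨⟨N, hN⟩, hle⟩ := ih
    obtain ⟨M, _, hM, hle'⟩ := step_forward hN hbc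
    exact ⟨⟨M, hM⟩, fun j => le_trans (hle j) (hle' j)⟩

lemma reach_incr (s : ℕ → ℕ) (n : ℕ) :
    Relation.ReflTransGen StepRel s (fun i => if i = 0 then s 0 + n else s i) := by
  induction n with
  | zero =>
    have h : (fun i => if i = 0 then s 0 + 0 else s i) = s := by
      funext i
      split_ifs with h
      · rw [h]; omega
      · rfl
    rw [h]
  | succ n ih =>
    refine ih.tail (Or.inl ?_)
    funext i
    simp only [incr, Function.update_apply]
    split_ifs with h1 h2 <;> omega

/-- For partitions `s, t`, `t` is reachable from `s` by a
finite sequence of `⇒`-steps iff `s ≥_∞ t`, i.e. `Σ_j(s) ≤ Σ_j(t)` for all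
`j`. -/
theorem stmt15 (s t : ℕ → ℕ) (hs : IsPartition s) (ht : IsPartition t) :
    Relation.ReflTransGen StepRel s t ↔ ∀ j, suff s j ≤ suff t j := by
  constructor
  · intro h j
    exact (forward hs.2 h).2 j
  · intro hsuff
    obtain ⟨Ns, hNs⟩ := hs.2
    obtain ⟨Nt, hNt⟩ := ht.2
    have hsN : ∀ i, Ns + Nt + 1 ≤ i → s i = 0 := fun i hi => hNs i (by omega)
    have htN : ∀ i, Ns + Nt + 1 ≤ i → t i = 0 := fun i hi => hNt i (by omega)
    set N := Ns + Nt + 1 with hN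
    have hs0 := suff_psum hsN (Nat.zero_le N)
    have ht0 := suff_psum htN (Nat.zero_le N)
    rw [psum_zero] at hs0 ht0
    have htotle : psum s N ≤ psum t N := by have := hsuff 0; omega
    set n := psum t N - psum s N with hn
    have h1 := reach_incr s n
    have hps' := psum_incrn s n
    have hval : ∀ k, (fun i => if i = 0 then s 0 + n else s i) k
        = if k = 0 then s 0 + n else s k := fun _ => rfl
    have hs'N : ∀ i, N ≤ i → (fun i => if i = 0 then s 0 + n else s i) i = 0 := by
      intro i hi
      rw [hval, if_neg (by omega)]
      exact hsN i hi
    have hs'p : IsPartition (fun i => if i = 0 then s 0 + n else s i) := by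
      constructor
      · intro i
        rw [hval, hval]
        by_cases e : i = 0
        · subst e
          rw [if_neg (by omega), if_pos rfl]
          have h3 := hs.1 0
          omega
        · rw [if_neg (by omega), if_neg e]
          exact hs.1 i
      · exact ⟨N, hs'N⟩
    have hdom : ∀ j, psum t j ≤ psum (fun i => if i = 0 then s 0 + n else s i) j := by
      intro j
      rw [hps' j]
      by_cases hj0 : j = 0
      · subst hj0
        rw [psum_zero, psum_zero]
        omega
      · rw [if_pos (by omega)]
        by_cases hj : j ≤ N
        · have e1 := suff_psum hsN hj
          have e2 := suff_psum htN hj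
          have e3 := hsuff j
          omega
        · have e4 : psum t j = psum t N := psum_stable t htN (by omega)
          have e5 : psum s j = psum s N := psum_stable s hsN (by omega)
          omega
    have heq : psum (fun i => if i = 0 then s 0 + n else s i) N = psum t N := by
      rw [hps' N, if_pos (by omega)]
      omega
    exact h1.trans (reach_of_dom N _ _ t hs'p ht hs'N htN hdom heq rfl)
end

section
/- Let s, t ∈ P with |s| = |t| = n. Then |inf_{(P,≥_∞)}(s,t)| = n and |sup_{(P,≥_∞)}(s,t)| = n; consequently, for every n the set of partitions of n is a sublattice of (P, ≥_∞) (on which the restriction of ≥_∞ coincides with the dominance order on partitions of n). -/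
private lemma suff_eq_sum {s : ℕ → ℕ} {N : ℕ} (hN : ∀ i, N ≤ i → s i = 0) (j : ℕ) :
    suff s j = ∑ i ∈ Finset.range N, s (j + i) := by
  unfold suff
  refine tsum_eq_sum (fun i hi => hN _ ?_)
  have : ¬ i < N := Finset.mem_range.not.mp hi
  omega

private lemma suff_add_psum {s : ℕ → ℕ} (hs : IsPartition s) (j : ℕ) :
    suff s j + psum s j = suff s 0 := by
  obtain ⟨hmono, N, hN⟩ := hs
  have h1 : suff s j = ∑ i ∈ Finset.range N, s (j + i) := suff_eq_sum hN j
  have h2 : suff s 0 = ∑ i ∈ Finset.range (j + N), s i := by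
    have := suff_eq_sum (s := s) (N := j + N) (fun i hi => hN i (by omega)) 0
    simpa using this
  rw [h1, h2, Finset.sum_range_add, psum]
  ring

private lemma anti_of_part {s : ℕ → ℕ} (hs : IsPartition s) {a b : ℕ} (h : a ≤ b) :
    s b ≤ s a :=
  antitone_nat_of_succ_le hs.1 h

private lemma suff_le_sub {s : ℕ → ℕ} (hs : IsPartition s) (j : ℕ) :
    suff s j ≤ suff s 0 - j := by
  by_cases h : suff s j = 0
  · omega
  · obtain ⟨hmono, N, hN⟩ := hs
    have h1 : suff s j = ∑ i ∈ Finset.range N, s (j + i) := suff_eq_sum hN j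
    have h2 : ∃ i, i ∈ Finset.range N ∧ s (j + i) ≠ 0 := by
      by_contra hc
      push_neg at hc
      exact h (h1.trans (Finset.sum_eq_zero (fun i hi => hc i hi)))
    obtain ⟨i, _, hi⟩ := h2
    have hpos : 1 ≤ s (j + i) := Nat.one_le_iff_ne_zero.mpr hi
    have hps : j ≤ psum s j := by
      calc j = ∑ _k ∈ Finset.range j, 1 := by simp
      _ ≤ ∑ k ∈ Finset.range j, s k := by
        refine Finset.sum_le_sum (fun k hk => ?_)
        have hk' : k < j := Finset.mem_range.mp hk
        have : s (j + i) ≤ s k := anti_of_part ⟨hmono, N, hN⟩ (by omega)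
        omega
    have := suff_add_psum ⟨hmono, N, hN⟩ j
    omega

/-- If `|s| = |t| = n` then the infimum and supremum of `s`
and `t` in `(P, ≥_∞)` also have total sum `n`; consequently the partitions of
`n` form a sublattice of `(P, ≥_∞)`, on which `≥_∞` coincides with the
dominance order. -/
theorem stmt16 (n : ℕ) :
    (∀ s t u : ℕ → ℕ, IsPartition s → IsPartition t → suff s 0 = n →
      suff t 0 = n → IsInfP s t u → suff u 0 = n) ∧
    (∀ s t u : ℕ → ℕ, IsPartition s → IsPartition t → suff s 0 = n →
      suff t 0 = n → IsSupP s t u → suff u 0 = n) ∧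
    (∀ s t : ℕ → ℕ, IsPartition s → IsPartition t → suff s 0 = n →
      suff t 0 = n → (GeInf s t ↔ Dom s t)) := by
  have key : ∀ s : ℕ → ℕ, IsPartition s → suff s 0 = n →
      ∀ j, suff s j + psum s j = n := by
    intro s hs hsn j; rw [← hsn]; exact suff_add_psum hs j
  -- the all-ones lower bound
  set d : ℕ → ℕ := fun i => if i < n then 1 else 0 with hd
  have hdp : IsPartition d := by
    constructor
    · intro i; simp only [hd]; split_ifs <;> omega
    · exact ⟨n, fun i hi => by simp only [hd]; split_ifs <;> omega⟩
  have hd0 : suff d 0 = n := by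
    rw [suff_eq_sum (s := d) (N := n) (fun i hi => by simp only [hd]; split_ifs <;> omega) 0]
    refine (Finset.sum_congr rfl (fun i hi => ?_)).trans (by simp : ∑ _i ∈ Finset.range n, 1 = n)
    have := Finset.mem_range.mp hi
    simp only [hd]; split_ifs <;> omega
  have hlb : ∀ v : ℕ → ℕ, IsPartition v → suff v 0 = n → GeInf v d := by
    intro v hv hvn j
    have h1 : suff v j ≤ n - j := by have := suff_le_sub hv j; omega
    have h2 := key d hdp hd0 j
    have h3 : psum d j ≤ j := by
      calc psum d j ≤ ∑ _k ∈ Finset.range j, 1 :=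
        Finset.sum_le_sum (fun k _ => by simp only [hd]; split_ifs <;> omega)
      _ = j := by simp
    omega
  -- the (n,0,0,...) upper bound
  set e : ℕ → ℕ := fun i => if i = 0 then n else 0 with he
  have heN : ∀ i, 1 ≤ i → e i = 0 := by
    intro i hi; simp only [he]; rw [if_neg (by omega)]
  have hep : IsPartition e := by
    refine ⟨fun i => ?_, 1, heN⟩
    rw [heN (i + 1) (by omega)]
    exact Nat.zero_le _
  have he0 : suff e 0 = n := by
    rw [suff_eq_sum (s := e) (N := 1) heN 0]; simp [he]
  have hub : ∀ v : ℕ → ℕ, IsPartition v → suff v 0 = n → GeInf e v := by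
    intro v hv hvn j
    match j with
    | 0 => rw [he0, hvn]
    | j + 1 =>
      rw [suff_eq_sum (s := e) (N := 1) heN (j + 1)]
      simp [he]
  refine ⟨?_, ?_, ?_⟩
  · intro s t u hs ht hsn htn hu
    obtain ⟨hup, hsu, htu, hmin⟩ := hu
    have h1 : n ≤ suff u 0 := by have := hsu 0; omega
    have h2 : suff u 0 ≤ suff d 0 := hmin d hdp (hlb s hs hsn) (hlb t ht htn) 0
    omega
  · intro s t u hs ht hsn htn hu
    obtain ⟨hup, hus, hut, hmax⟩ := hu
    have h1 : suff u 0 ≤ n := by have := hus 0; omega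
    have h2 : suff e 0 ≤ suff u 0 := hmax e hep (hub s hs hsn) (hub t ht htn) 0
    omega
  · intro s t hs ht hsn htn
    constructor
    · intro h j
      have h1 := key s hs hsn j
      have h2 := key t ht htn j
      have := h j
      omega
    · intro h j
      have h1 := key s hs hsn j
      have h2 := key t ht htn j
      have := h j
      omega
end
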